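/- Let (X, 𝒜, μ) be a finite measure space, let p ≥ 2 and p' = p/(p−1). Let G : ℝ × S³_d → S³_d be continuous, satisfy the growth condition |G(θ,T)| ≤ C(1+|T|)^{p−1}, and be monotone in its second variable: (G(θ,T₁) − G(θ,T₂)) : (T₁ − T₂) ≥ 0 for all T₁, T₂ ∈ S³_d and θ ∈ ℝ. Let θ_n, θ : X → ℝ be measurable with θ_n → θ μ-almost everywhere; let T_n, T : X → S³_d be measurable with sup_n ∫ |T_n|^p dμ < ∞ and ∫ |T|^p dμ < ∞; and let χ : X → S³_d be measurable with ∫ |χ|^{p'} dμ < ∞. Assume: (i) for every measurable φ : X → S³_d with ∫|φ|^p dμ < ∞, ∫ G(θ_n(x),T_n(x)) : φ(x) dμ → ∫ χ(x) : φ(x) dμ; (ii) for every measurable φ : X → S³_d with ∫|φ|^{p'} dμ < ∞, ∫ T_n(x) : φ(x) dμ → ∫ T(x) : φ(x) dμ; and (iii) limsup_n ∫ G(θ_n(x),T_n(x)) : T_n(x) dμ ≤ ∫ χ(x) : T(x) dμ. Then χ(x) = G(θ(x), T(x)) for μ-almost every x ∈ X. -/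

import Mathlib

open MeasureTheory Filter

noncomputable instance : MeasurableSpace (Matrix (Fin 3) (Fin 3) ℝ) :=
  (inferInstance : MeasurableSpace (Fin 3 → Fin 3 → ℝ))

/-- The Frobenius inner product `A : B = ∑ᵢⱼ aᵢⱼ bᵢⱼ` of `3 × 3` real matrices. -/
noncomputable def frob (A B : Matrix (Fin 3) (Fin 3) ℝ) : ℝ := ∑ i, ∑ j, A i j * B i j

/-- The Frobenius norm `|A|` of a `3 × 3` real matrix. -/
noncomputable def frobNorm (A : Matrix (Fin 3) (Fin 3) ℝ) : ℝ := Real.sqrt (frob A A)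

/-- `A ∈ S³_d` : `A` is a symmetric traceless `3 × 3` real matrix. -/
def IsS3d (A : Matrix (Fin 3) (Fin 3) ℝ) : Prop := A.IsSymm ∧ A.trace = 0

/-! ### Auxiliary material -/

abbrev M3 := Matrix (Fin 3) (Fin 3) ℝ

instance : SecondCountableTopology M3 :=
  inferInstanceAs (SecondCountableTopology (Fin 3 → Fin 3 → ℝ))

instance : BorelSpace M3 := ⟨(Pi.borelSpace (X := fun _ : Fin 3 => Fin 3 → ℝ)).measurable_eq⟩

/-- Embedding of matrices into Euclidean space. -/
def embM (A : M3) : EuclideanSpace ℝ (Fin 3 × Fin 3) :=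
  WithLp.toLp 2 (fun q : Fin 3 × Fin 3 => A q.1 q.2)

lemma frob_eq_inner (A B : M3) : frob A B = inner ℝ (embM A) (embM B) := by
  simp [frob, embM, PiLp.inner_apply, RCLike.inner_apply, Fintype.sum_prod_type, mul_comm]

lemma frobNorm_eq_norm (A : M3) : frobNorm A = ‖embM A‖ := by
  rw [EuclideanSpace.norm_eq]
  simp [frobNorm, frob, embM, Fintype.sum_prod_type, Real.norm_eq_abs, sq_abs, pow_two]

lemma embM_sub (A B : M3) : embM (A - B) = embM A - embM B := rfl
lemma embM_smul (c : ℝ) (A : M3) : embM (c • A) = c • embM A := rfl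

lemma frobNorm_nonneg (A : M3) : 0 ≤ frobNorm A := Real.sqrt_nonneg _

lemma frob_comm (A B : M3) : frob A B = frob B A := by
  rw [frob_eq_inner, frob_eq_inner, real_inner_comm]

lemma frob_sub_left (A B C : M3) : frob (A - B) C = frob A C - frob B C := by
  rw [frob_eq_inner, frob_eq_inner, frob_eq_inner, embM_sub, inner_sub_left]

lemma frob_sub_right (A B C : M3) : frob A (B - C) = frob A B - frob A C := by
  rw [frob_eq_inner, frob_eq_inner, frob_eq_inner, embM_sub, inner_sub_right]

lemma frob_smul_right (c : ℝ) (A B : M3) : frob A (c • B) = c * frob A B := by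
  rw [frob_eq_inner, frob_eq_inner, embM_smul, real_inner_smul_right]

lemma abs_frob_le (A B : M3) : |frob A B| ≤ frobNorm A * frobNorm B := by
  rw [frob_eq_inner, frobNorm_eq_norm, frobNorm_eq_norm]
  exact abs_real_inner_le_norm _ _

lemma frob_self_eq (A : M3) : frob A A = frobNorm A * frobNorm A := by
  rw [frob_eq_inner, frobNorm_eq_norm, real_inner_self_eq_norm_mul_norm]

lemma frobNorm_sub_le (A B : M3) : frobNorm (A - B) ≤ frobNorm A + frobNorm B := by
  rw [frobNorm_eq_norm, frobNorm_eq_norm, frobNorm_eq_norm, embM_sub]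
  exact norm_sub_le _ _

lemma frobNorm_smul (c : ℝ) (A : M3) : frobNorm (c • A) = |c| * frobNorm A := by
  rw [frobNorm_eq_norm, frobNorm_eq_norm, embM_smul, norm_smul, Real.norm_eq_abs]

lemma frobNorm_eq_zero_iff (A : M3) : frobNorm A = 0 ↔ A = 0 := by
  rw [frobNorm_eq_norm, norm_eq_zero]
  constructor
  · intro h; funext i j; simpa [embM] using congrArg (fun v => v (i, j)) h
  · rintro rfl; ext q; simp [embM]

lemma continuous_frob : Continuous (fun q : M3 × M3 => frob q.1 q.2) := by
  unfold frob
  refine continuous_finset_sum _ fun i _ => continuous_finset_sum _ fun j _ => ?_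
  exact ((continuous_fst.matrix_elem i j).mul
    (continuous_snd.matrix_elem i j))

lemma continuous_frob_left (B : M3) : Continuous (fun A : M3 => frob A B) :=
  continuous_frob.comp (continuous_id.prodMk continuous_const)

lemma continuous_frobNorm : Continuous frobNorm :=
  Real.continuous_sqrt.comp (continuous_frob.comp (continuous_id.prodMk continuous_id))

lemma continuous_rpow_const {q : ℝ} (hq : 0 ≤ q) : Continuous (fun y : ℝ => y ^ q) :=
  continuous_iff_continuousAt.mpr fun x => Real.continuousAt_rpow_const x q (Or.inr hq)

lemma IsS3d.sub' {A B : M3} (hA : IsS3d A) (hB : IsS3d B) : IsS3d (A - B) :=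
  ⟨by rw [Matrix.IsSymm, Matrix.transpose_sub, hA.1, hB.1],
   by rw [Matrix.trace_sub, hA.2, hB.2, sub_zero]⟩

lemma IsS3d.smul' {A : M3} (c : ℝ) (hA : IsS3d A) : IsS3d (c • A) :=
  ⟨by rw [Matrix.IsSymm, Matrix.transpose_smul, hA.1],
   by rw [Matrix.trace_smul, hA.2, smul_zero]⟩

lemma rpow_add_le {a b r : ℝ} (ha : 0 ≤ a) (hb : 0 ≤ b) (hr : 1 ≤ r) :
    (a + b) ^ r ≤ 2 ^ r * (a ^ r + b ^ r) := by
  have h1 : a + b ≤ 2 * max a b := by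
    rcases le_total a b with h | h
    · simp [max_eq_right h]; linarith
    · simp [max_eq_left h]; linarith
  have h0 : (0:ℝ) ≤ max a b := le_max_of_le_left ha
  calc (a + b) ^ r ≤ (2 * max a b) ^ r :=
        Real.rpow_le_rpow (by linarith) h1 (by linarith)
    _ = 2 ^ r * (max a b) ^ r := Real.mul_rpow (by norm_num) h0
    _ ≤ 2 ^ r * (a ^ r + b ^ r) := by
        refine mul_le_mul_of_nonneg_left ?_ (Real.rpow_nonneg (by norm_num) r)
        rcases le_total a b with h | h
        · rw [max_eq_right h]
          have := Real.rpow_nonneg ha r; linarith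
        · rw [max_eq_left h]
          have := Real.rpow_nonneg hb r; linarith

lemma rpow_le_one_add_rpow {x r s : ℝ} (hx : 0 ≤ x) (hr : 0 ≤ r) (hrs : r ≤ s) :
    x ^ r ≤ 1 + x ^ s := by
  rcases le_total x 1 with h | h
  · have h1 : x ^ r ≤ 1 := Real.rpow_le_one hx h hr
    have := Real.rpow_nonneg hx s; linarith
  · have h1 : x ^ r ≤ x ^ s := Real.rpow_le_rpow_of_exponent_le h hrs
    have := Real.rpow_nonneg hx r; linarith

lemma memLp_of_integrable_rpow {X : Type*} [MeasurableSpace X] {μ : Measure X}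
    {h : X → ℝ} (hm : Measurable h) (h0 : ∀ x, 0 ≤ h x) {r : ℝ} (hr : 1 ≤ r)
    (hi : Integrable (fun x => h x ^ r) μ) : MemLp h (ENNReal.ofReal r) μ := by
  have hr0 : (0:ℝ) < r := by linarith
  have hq0 : ENNReal.ofReal r ≠ 0 := by
    simp [ENNReal.ofReal_eq_zero]; linarith
  have hqt : ENNReal.ofReal r ≠ ⊤ := ENNReal.ofReal_ne_top
  refine (memLp_norm_rpow_iff (μ := μ) (p := ENNReal.ofReal r)
    hm.aestronglyMeasurable hq0 hqt).mp ?_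
  rw [ENNReal.div_self hq0 hqt, memLp_one_iff_integrable]
  rw [ENNReal.toReal_ofReal hr0.le]
  refine hi.congr (Eventually.of_forall fun x => ?_)
  simp only [Real.norm_of_nonneg (h0 x)]

section aux
variable {X : Type*} [MeasurableSpace X] {μ : Measure X} {p q : ℝ}

lemma aux_meas_frob {f g : X → M3} (hf : Measurable f) (hg : Measurable g) :
    Measurable fun x => frob (f x) (g x) :=
  continuous_frob.measurable.comp (hf.prodMk hg)

lemma aux_meas_frobNorm {f : X → M3} (hf : Measurable f) :
    Measurable fun x => frobNorm (f x) :=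
  continuous_frobNorm.measurable.comp hf

lemma aux_meas_frobNorm_rpow {f : X → M3} (hf : Measurable f) {r : ℝ} (hr : 0 ≤ r) :
    Measurable fun x => frobNorm (f x) ^ r :=
  (continuous_rpow_const hr).measurable.comp (aux_meas_frobNorm hf)

lemma aux_int_mul (hpq : p.HolderConjugate q) {f g : X → M3}
    (hf : Measurable f) (hg : Measurable g)
    (hif : Integrable (fun x => frobNorm (f x) ^ p) μ)
    (hig : Integrable (fun x => frobNorm (g x) ^ q) μ) :
    Integrable (fun x => frobNorm (f x) * frobNorm (g x)) μ := by
  refine Integrable.mono' (hif.add hig) ((aux_meas_frobNorm hf).mul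
    (aux_meas_frobNorm hg)).aestronglyMeasurable (Eventually.of_forall fun x => ?_)
  rw [Real.norm_of_nonneg (mul_nonneg (frobNorm_nonneg _) (frobNorm_nonneg _))]
  calc frobNorm (f x) * frobNorm (g x)
      ≤ frobNorm (f x) ^ p / p + frobNorm (g x) ^ q / q :=
        Real.young_inequality_of_nonneg (frobNorm_nonneg _) (frobNorm_nonneg _) hpq
    _ ≤ frobNorm (f x) ^ p + frobNorm (g x) ^ q := by
        have h1 := Real.rpow_nonneg (frobNorm_nonneg (f x)) p
        have h2 := Real.rpow_nonneg (frobNorm_nonneg (g x)) q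
        have h3 := div_le_self h1 hpq.lt.le
        have h4 := div_le_self h2 hpq.symm.lt.le
        linarith

lemma aux_int_frob (hpq : p.HolderConjugate q) {f g : X → M3}
    (hf : Measurable f) (hg : Measurable g)
    (hif : Integrable (fun x => frobNorm (f x) ^ p) μ)
    (hig : Integrable (fun x => frobNorm (g x) ^ q) μ) :
    Integrable (fun x => frob (f x) (g x)) μ := by
  refine Integrable.mono' (aux_int_mul hpq hf hg hif hig)
    (aux_meas_frob hf hg).aestronglyMeasurable (Eventually.of_forall fun x => ?_)
  rw [Real.norm_eq_abs]; exact abs_frob_le _ _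

lemma aux_holder (hpq : p.HolderConjugate q) {f g : X → M3}
    (hf : Measurable f) (hg : Measurable g)
    (hif : Integrable (fun x => frobNorm (f x) ^ p) μ)
    (hig : Integrable (fun x => frobNorm (g x) ^ q) μ) :
    ∫ x, frobNorm (f x) * frobNorm (g x) ∂μ ≤
      (∫ x, frobNorm (f x) ^ p ∂μ) ^ (1/p) * (∫ x, frobNorm (g x) ^ q ∂μ) ^ (1/q) :=
  integral_mul_le_Lp_mul_Lq_of_nonneg hpq
    (Eventually.of_forall fun _ => frobNorm_nonneg _)
    (Eventually.of_forall fun _ => frobNorm_nonneg _)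
    (memLp_of_integrable_rpow (aux_meas_frobNorm hf) (fun _ => frobNorm_nonneg _)
      hpq.lt.le hif)
    (memLp_of_integrable_rpow (aux_meas_frobNorm hg) (fun _ => frobNorm_nonneg _)
      hpq.symm.lt.le hig)

end aux

/-- **Minty–Browder identification of the weak limit (equation (2.57)).**
If `G` is continuous, has `(p-1)`-growth and is monotone in its second
variable, `θ_n → θ` a.e., `T_n` is bounded in `L^p`, `G(θ_n,T_n) ⇀ χ` in
`L^{p'}`, `T_n ⇀ T` in `L^p` (both expressed via duality pairings), and
`limsup_n ∫ G(θ_n,T_n) : T_n dμ ≤ ∫ χ : T dμ`, then `χ = G(θ,T)` a.e. -/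
theorem minty_browder_identification
    {X : Type*} [MeasurableSpace X] (μ : Measure X) [IsFiniteMeasure μ]
    (p C : ℝ) (hp : 2 ≤ p) (hC : 0 < C)
    (G : ℝ → Matrix (Fin 3) (Fin 3) ℝ → Matrix (Fin 3) (Fin 3) ℝ)
    (hG_cont : Continuous (fun q : ℝ × Matrix (Fin 3) (Fin 3) ℝ => G q.1 q.2))
    (hG_maps : ∀ (ϑ : ℝ) (S : Matrix (Fin 3) (Fin 3) ℝ), IsS3d S → IsS3d (G ϑ S))
    (hG_growth : ∀ (ϑ : ℝ) (S : Matrix (Fin 3) (Fin 3) ℝ), IsS3d S →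
      frobNorm (G ϑ S) ≤ C * (1 + frobNorm S) ^ (p - 1))
    (hG_mono : ∀ (ϑ : ℝ) (S₁ S₂ : Matrix (Fin 3) (Fin 3) ℝ), IsS3d S₁ → IsS3d S₂ →
      0 ≤ frob (G ϑ S₁ - G ϑ S₂) (S₁ - S₂))
    (θn : ℕ → X → ℝ) (θ : X → ℝ)
    (hθn : ∀ n, Measurable (θn n)) (hθ : Measurable θ)
    (hθconv : ∀ᵐ x ∂μ, Tendsto (fun n => θn n x) atTop (nhds (θ x)))
    (Tn : ℕ → X → Matrix (Fin 3) (Fin 3) ℝ) (T : X → Matrix (Fin 3) (Fin 3) ℝ)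
    (hTn : ∀ n, Measurable (Tn n)) (hT : Measurable T)
    (hTnd : ∀ n x, IsS3d (Tn n x)) (hTd : ∀ x, IsS3d (T x))
    (hTn_int : ∀ n, Integrable (fun x => frobNorm (Tn n x) ^ p) μ)
    (hTn_bdd : ∃ M : ℝ, ∀ n, ∫ x, frobNorm (Tn n x) ^ p ∂μ ≤ M)
    (hT_int : Integrable (fun x => frobNorm (T x) ^ p) μ)
    (χ : X → Matrix (Fin 3) (Fin 3) ℝ) (hχ : Measurable χ)
    (hχd : ∀ x, IsS3d (χ x))
    (hχ_int : Integrable (fun x => frobNorm (χ x) ^ (p / (p - 1))) μ)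
    -- (i) weak `L^{p'}` convergence of `G(θ_n, T_n)` to `χ` :
    (hweakG : ∀ φ : X → Matrix (Fin 3) (Fin 3) ℝ, Measurable φ →
      (∀ x, IsS3d (φ x)) → Integrable (fun x => frobNorm (φ x) ^ p) μ →
      Tendsto (fun n => ∫ x, frob (G (θn n x) (Tn n x)) (φ x) ∂μ) atTop
        (nhds (∫ x, frob (χ x) (φ x) ∂μ)))
    -- (ii) weak `L^p` convergence of `T_n` to `T` :
    (hweakT : ∀ φ : X → Matrix (Fin 3) (Fin 3) ℝ, Measurable φ →
      (∀ x, IsS3d (φ x)) → Integrable (fun x => frobNorm (φ x) ^ (p / (p - 1))) μ →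
      Tendsto (fun n => ∫ x, frob (Tn n x) (φ x) ∂μ) atTop
        (nhds (∫ x, frob (T x) (φ x) ∂μ)))
    -- (iii) the limsup energy inequality :
    (hlimsup : limsup (fun n => ∫ x, frob (G (θn n x) (Tn n x)) (Tn n x) ∂μ) atTop
        ≤ ∫ x, frob (χ x) (T x) ∂μ) :
    ∀ᵐ x ∂μ, χ x = G (θ x) (T x) := by
  have hp1 : (1:ℝ) < p := by linarith
  have hpq : p.HolderConjugate (p / (p - 1)) := Real.HolderConjugate.conjExponent hp1
  set q : ℝ := p / (p - 1) with hqdef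
  have hq1 : 1 < q := hpq.symm.lt
  have hp0 : (0:ℝ) < p := hpq.pos
  have hq0 : (0:ℝ) < q := hpq.symm.pos
  have hqp : (p - 1) * q = p := hpq.sub_one_mul_conj
  -- measurability helper
  have mG : ∀ (η : X → ℝ) (f : X → M3), Measurable η → Measurable f →
      Measurable (fun x => G (η x) (f x)) := fun η f hη hf =>
    hG_cont.measurable.comp (hη.prodMk hf)
  -- pointwise growth of `G` raised to power `q`
  have hGq : ∀ (ϑ : ℝ) (S : M3), IsS3d S →
      frobNorm (G ϑ S) ^ q ≤ C ^ q * (1 + frobNorm S) ^ p := by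
    intro ϑ S hS
    have hb : (0:ℝ) ≤ 1 + frobNorm S := by have := frobNorm_nonneg S; linarith
    calc frobNorm (G ϑ S) ^ q ≤ (C * (1 + frobNorm S) ^ (p - 1)) ^ q :=
          Real.rpow_le_rpow (frobNorm_nonneg _) (hG_growth ϑ S hS) hq0.le
      _ = C ^ q * (1 + frobNorm S) ^ p := by
          rw [Real.mul_rpow hC.le (Real.rpow_nonneg hb _), ← Real.rpow_mul hb, hqp]
  -- integrability of `(1 + |f|)^p`
  have key1 : ∀ (f : X → M3), Measurable f → Integrable (fun x => frobNorm (f x) ^ p) μ →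
      Integrable (fun x => (1 + frobNorm (f x)) ^ p) μ := by
    intro f hf hi
    refine Integrable.mono' (((integrable_const (1:ℝ)).add hi).const_mul (2 ^ p))
      ((continuous_rpow_const hp0.le).measurable.comp
        (measurable_const.add (aux_meas_frobNorm hf))).aestronglyMeasurable
      (Eventually.of_forall fun x => ?_)
    have hb : (0:ℝ) ≤ 1 + frobNorm (f x) := by have := frobNorm_nonneg (f x); linarith
    rw [Real.norm_of_nonneg (Real.rpow_nonneg hb _)]
    calc (1 + frobNorm (f x)) ^ p ≤ 2 ^ p * (1 ^ p + frobNorm (f x) ^ p) :=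
          rpow_add_le (by norm_num) (frobNorm_nonneg _) hp1.le
      _ = 2 ^ p * (1 + frobNorm (f x) ^ p) := by rw [Real.one_rpow]
  -- integrability of `|G(η, f)|^q`
  have keyG : ∀ (η : X → ℝ) (f : X → M3), Measurable η → Measurable f →
      (∀ x, IsS3d (f x)) → Integrable (fun x => frobNorm (f x) ^ p) μ →
      Integrable (fun x => frobNorm (G (η x) (f x)) ^ q) μ := by
    intro η f hη hf hfd hi
    refine Integrable.mono' ((key1 f hf hi).const_mul (C ^ q))
      (aux_meas_frobNorm_rpow (mG η f hη hf) hq0.le).aestronglyMeasurable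
      (Eventually.of_forall fun x => ?_)
    rw [Real.norm_of_nonneg (Real.rpow_nonneg (frobNorm_nonneg _) _)]
    exact hGq _ _ (hfd x)
  obtain ⟨M, hM⟩ := hTn_bdd
  have hM0 : (0:ℝ) ≤ M :=
    le_trans (integral_nonneg fun x => Real.rpow_nonneg (frobNorm_nonneg _) _) (hM 0)
  have iGn : ∀ n, Integrable (fun x => frobNorm (G (θn n x) (Tn n x)) ^ q) μ :=
    fun n => keyG _ _ (hθn n) (hTn n) (hTnd n) (hTn_int n)
  -- Step A : Minty inequality for arbitrary test functions
  have hStepA : ∀ φ : X → M3, Measurable φ → (∀ x, IsS3d (φ x)) →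
      Integrable (fun x => frobNorm (φ x) ^ p) μ →
      0 ≤ ∫ x, frob (χ x - G (θ x) (φ x)) (T x - φ x) ∂μ := by
    intro φ hφm hφd hφi
    have hφb : ∀ x, (0:ℝ) < 1 + frobNorm (φ x) := by
      intro x; have := frobNorm_nonneg (φ x); linarith
    have hGφm : Measurable (fun x => G (θ x) (φ x)) := mG θ φ hθ hφm
    have hGφnm : ∀ n, Measurable (fun x => G (θn n x) (φ x)) := fun n => mG _ _ (hθn n) hφm
    have iGφ : Integrable (fun x => frobNorm (G (θ x) (φ x)) ^ q) μ := keyG θ φ hθ hφm hφd hφi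
    have iGφn : ∀ n, Integrable (fun x => frobNorm (G (θn n x) (φ x)) ^ q) μ :=
      fun n => keyG _ φ (hθn n) hφm hφd hφi
    -- limit of `∫ G(θ_n,T_n) : φ`
    have h2 : Tendsto (fun n => ∫ x, frob (G (θn n x) (Tn n x)) (φ x) ∂μ) atTop
        (nhds (∫ x, frob (χ x) (φ x) ∂μ)) := hweakG φ hφm hφd hφi
    -- limit of `∫ G(θ_n,φ) : φ` by dominated convergence
    have h4 : Tendsto (fun n => ∫ x, frob (G (θn n x) (φ x)) (φ x) ∂μ) atTop
        (nhds (∫ x, frob (G (θ x) (φ x)) (φ x) ∂μ)) := by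
      refine tendsto_integral_of_dominated_convergence
        (fun x => C * (1 + frobNorm (φ x)) ^ p)
        (fun n => (aux_meas_frob (hGφnm n) hφm).aestronglyMeasurable)
        ((key1 φ hφm hφi).const_mul C) (fun n => Eventually.of_forall fun x => ?_)
        (hθconv.mono fun x hx => ?_)
      · rw [Real.norm_eq_abs]
        calc |frob (G (θn n x) (φ x)) (φ x)|
            ≤ frobNorm (G (θn n x) (φ x)) * frobNorm (φ x) := abs_frob_le _ _
          _ ≤ (C * (1 + frobNorm (φ x)) ^ (p-1)) * (1 + frobNorm (φ x)) := by
              refine mul_le_mul (hG_growth _ _ (hφd x)) (by linarith [frobNorm_nonneg (φ x)])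
                (frobNorm_nonneg _) ?_
              have := Real.rpow_nonneg (hφb x).le (p - 1)
              positivity
          _ = C * (1 + frobNorm (φ x)) ^ p := by
              rw [mul_assoc, ← Real.rpow_add_one (hφb x).ne', sub_add_cancel]
      · exact ((continuous_frob_left (φ x)).tendsto _).comp
          ((hG_cont.tendsto (θ x, φ x)).comp (hx.prodMk_nhds tendsto_const_nhds))
    -- strong convergence of `G(θ_n, φ)` in `L^q`
    have hΔm : ∀ n, Measurable (fun x => G (θn n x) (φ x) - G (θ x) (φ x)) :=
      fun n => (hGφnm n).sub hGφm
    have hΔbound : ∀ n x, frobNorm (G (θn n x) (φ x) - G (θ x) (φ x))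
        ≤ 2 * C * (1 + frobNorm (φ x)) ^ (p-1) := by
      intro n x
      have := hG_growth (θn n x) (φ x) (hφd x)
      have := hG_growth (θ x) (φ x) (hφd x)
      have := frobNorm_sub_le (G (θn n x) (φ x)) (G (θ x) (φ x))
      linarith
    have iΔ : ∀ n, Integrable
        (fun x => frobNorm (G (θn n x) (φ x) - G (θ x) (φ x)) ^ q) μ := by
      intro n
      refine Integrable.mono' ((key1 φ hφm hφi).const_mul ((2*C) ^ q))
        (aux_meas_frobNorm_rpow (hΔm n) hq0.le).aestronglyMeasurable
        (Eventually.of_forall fun x => ?_)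
      rw [Real.norm_of_nonneg (Real.rpow_nonneg (frobNorm_nonneg _) q)]
      calc frobNorm (G (θn n x) (φ x) - G (θ x) (φ x)) ^ q
          ≤ (2 * C * (1 + frobNorm (φ x)) ^ (p-1)) ^ q :=
            Real.rpow_le_rpow (frobNorm_nonneg _) (hΔbound n x) hq0.le
        _ = (2*C) ^ q * (1 + frobNorm (φ x)) ^ p := by
            rw [Real.mul_rpow (by positivity) (Real.rpow_nonneg (hφb x).le _),
              ← Real.rpow_mul (hφb x).le, hqp]
    have hΔ0 : Tendsto (fun n => ∫ x, frobNorm (G (θn n x) (φ x) - G (θ x) (φ x)) ^ q ∂μ)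
        atTop (nhds 0) := by
      have hlim : Tendsto (fun n => ∫ x, frobNorm (G (θn n x) (φ x) - G (θ x) (φ x)) ^ q ∂μ)
          atTop (nhds (∫ _x, (0:ℝ) ∂μ)) := by
        refine tendsto_integral_of_dominated_convergence
          (fun x => (2*C) ^ q * (1 + frobNorm (φ x)) ^ p)
          (fun n => (aux_meas_frobNorm_rpow (hΔm n) hq0.le).aestronglyMeasurable)
          ((key1 φ hφm hφi).const_mul _) (fun n => Eventually.of_forall fun x => ?_)
          (hθconv.mono fun x hx => ?_)
        · rw [Real.norm_of_nonneg (Real.rpow_nonneg (frobNorm_nonneg _) q)]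
          calc frobNorm (G (θn n x) (φ x) - G (θ x) (φ x)) ^ q
              ≤ (2 * C * (1 + frobNorm (φ x)) ^ (p-1)) ^ q :=
                Real.rpow_le_rpow (frobNorm_nonneg _) (hΔbound n x) hq0.le
            _ = (2*C) ^ q * (1 + frobNorm (φ x)) ^ p := by
                rw [Real.mul_rpow (by positivity) (Real.rpow_nonneg (hφb x).le _),
                  ← Real.rpow_mul (hφb x).le, hqp]
        · have hG1 : Tendsto (fun n => G (θn n x) (φ x)) atTop (nhds (G (θ x) (φ x))) :=
            (hG_cont.tendsto (θ x, φ x)).comp (hx.prodMk_nhds tendsto_const_nhds)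
          have hG2 : Tendsto (fun n => G (θn n x) (φ x) - G (θ x) (φ x)) atTop (nhds 0) := by
            simpa using hG1.sub_const (G (θ x) (φ x))
          have hG3 : Tendsto (fun n => frobNorm (G (θn n x) (φ x) - G (θ x) (φ x)))
              atTop (nhds 0) := by
            have := (continuous_frobNorm.tendsto (0:M3)).comp hG2
            simpa [Function.comp_def, (frobNorm_eq_zero_iff (0:M3)).mpr rfl] using this
          have := hG3.rpow_const (p := q) (Or.inr hq0.le)
          simpa [Real.zero_rpow hq0.ne'] using this
      simpa using hlim
    -- the mixed term `∫ (G(θ_n,φ) - G(θ,φ)) : T_n` vanishes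
    have h3a : Tendsto
        (fun n => ∫ x, frob (G (θn n x) (φ x) - G (θ x) (φ x)) (Tn n x) ∂μ)
        atTop (nhds 0) := by
      have hItn : ∀ n, (0:ℝ) ≤ ∫ x, frobNorm (G (θn n x) (φ x) - G (θ x) (φ x)) ^ q ∂μ :=
        fun n => integral_nonneg fun x => Real.rpow_nonneg (frobNorm_nonneg _) _
      refine squeeze_zero_norm (a := fun n =>
        (∫ x, frobNorm (G (θn n x) (φ x) - G (θ x) (φ x)) ^ q ∂μ) ^ (1/q) * M ^ (1/p))
        (fun n => ?_) ?_
      · have hprod : Integrable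
            (fun x => frobNorm (G (θn n x) (φ x) - G (θ x) (φ x)) * frobNorm (Tn n x)) μ :=
          aux_int_mul hpq.symm (hΔm n) (hTn n) (iΔ n) (hTn_int n)
        calc ‖∫ x, frob (G (θn n x) (φ x) - G (θ x) (φ x)) (Tn n x) ∂μ‖
            ≤ ∫ x, ‖frob (G (θn n x) (φ x) - G (θ x) (φ x)) (Tn n x)‖ ∂μ :=
              norm_integral_le_integral_norm _
          _ ≤ ∫ x, frobNorm (G (θn n x) (φ x) - G (θ x) (φ x)) * frobNorm (Tn n x) ∂μ := by
              refine integral_mono_of_nonneg (Eventually.of_forall fun x => norm_nonneg _)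
                hprod (Eventually.of_forall fun x => ?_)
              simp only [Real.norm_eq_abs]; exact abs_frob_le _ _
          _ ≤ (∫ x, frobNorm (G (θn n x) (φ x) - G (θ x) (φ x)) ^ q ∂μ) ^ (1/q)
              * (∫ x, frobNorm (Tn n x) ^ p ∂μ) ^ (1/p) :=
              aux_holder hpq.symm (hΔm n) (hTn n) (iΔ n) (hTn_int n)
          _ ≤ (∫ x, frobNorm (G (θn n x) (φ x) - G (θ x) (φ x)) ^ q ∂μ) ^ (1/q)
              * M ^ (1/p) := by
              refine mul_le_mul_of_nonneg_left
                (Real.rpow_le_rpow (integral_nonneg fun x =>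
                  Real.rpow_nonneg (frobNorm_nonneg _) _) (hM n) (by positivity))
                (Real.rpow_nonneg (hItn n) _)
      · have hc : Tendsto
            (fun n => (∫ x, frobNorm (G (θn n x) (φ x) - G (θ x) (φ x)) ^ q ∂μ) ^ (1/q))
            atTop (nhds 0) := by
          have := hΔ0.rpow_const (p := 1/q) (Or.inr (by positivity))
          simpa [one_div, Real.zero_rpow (show q⁻¹ ≠ 0 by positivity)] using this
        have := hc.mul_const (M ^ (1/p))
        rw [zero_mul] at this
        exact this
    -- weak convergence against `G(θ,φ)`
    have h3b : Tendsto (fun n => ∫ x, frob (Tn n x) (G (θ x) (φ x)) ∂μ) atTop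
        (nhds (∫ x, frob (T x) (G (θ x) (φ x)) ∂μ)) :=
      hweakT _ hGφm (fun x => hG_maps _ _ (hφd x)) iGφ
    -- limit of `∫ G(θ_n,φ) : T_n`
    have h3 : Tendsto (fun n => ∫ x, frob (G (θn n x) (φ x)) (Tn n x) ∂μ) atTop
        (nhds (∫ x, frob (G (θ x) (φ x)) (T x) ∂μ)) := by
      have hsplit : ∀ n, ∫ x, frob (G (θn n x) (φ x)) (Tn n x) ∂μ
          = (∫ x, frob (G (θn n x) (φ x) - G (θ x) (φ x)) (Tn n x) ∂μ)
            + ∫ x, frob (Tn n x) (G (θ x) (φ x)) ∂μ := by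
        intro n
        rw [← integral_add (aux_int_frob hpq.symm (hΔm n) (hTn n) (iΔ n) (hTn_int n))
          (aux_int_frob hpq (hTn n) hGφm (hTn_int n) iGφ)]
        refine integral_congr_ae (Eventually.of_forall fun x => ?_)
        simp only [frob_sub_left]
        rw [frob_comm (Tn n x) (G (θ x) (φ x))]
        ring
      simp only [hsplit]
      have := h3a.add h3b
      rw [zero_add] at this
      convert this using 2
      exact integral_congr_ae (Eventually.of_forall fun x => frob_comm _ _)
    -- boundedness from above of the energy terms
    have ht1bdd : ∀ n, ∫ x, frob (G (θn n x) (Tn n x)) (Tn n x) ∂μ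
        ≤ C ^ q * (2 ^ p * ((μ Set.univ).toReal + M)) + M := by
      intro n
      have hint1 : Integrable (fun x => frob (G (θn n x) (Tn n x)) (Tn n x)) μ :=
        aux_int_frob hpq.symm (mG _ _ (hθn n) (hTn n)) (hTn n) (iGn n) (hTn_int n)
      have hbnd : Integrable
          (fun x => C ^ q * (2 ^ p * (1 + frobNorm (Tn n x) ^ p)) + frobNorm (Tn n x) ^ p) μ :=
        ((((integrable_const (1:ℝ)).add (hTn_int n)).const_mul (2 ^ p)).const_mul
          (C ^ q)).add (hTn_int n)
      have hc1 : ∫ x, frob (G (θn n x) (Tn n x)) (Tn n x) ∂μ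
          ≤ ∫ x, C ^ q * (2 ^ p * (1 + frobNorm (Tn n x) ^ p)) + frobNorm (Tn n x) ^ p ∂μ := by
        refine integral_mono hint1 hbnd fun x => ?_
        have hTb : (0:ℝ) < 1 + frobNorm (Tn n x) := by
          have := frobNorm_nonneg (Tn n x); linarith
        have hy : frobNorm (G (θn n x) (Tn n x)) * frobNorm (Tn n x)
            ≤ frobNorm (G (θn n x) (Tn n x)) ^ q + frobNorm (Tn n x) ^ p := by
          have := Real.young_inequality_of_nonneg (frobNorm_nonneg (G (θn n x) (Tn n x)))
            (frobNorm_nonneg (Tn n x)) hpq.symm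
          have h1 := Real.rpow_nonneg (frobNorm_nonneg (G (θn n x) (Tn n x))) q
          have h2 := Real.rpow_nonneg (frobNorm_nonneg (Tn n x)) p
          have h3 := div_le_self h1 hq1.le
          have h4 := div_le_self h2 hp1.le
          linarith
        have hup : (1 + frobNorm (Tn n x)) ^ p ≤ 2 ^ p * (1 + frobNorm (Tn n x) ^ p) := by
          calc (1 + frobNorm (Tn n x)) ^ p
              ≤ 2 ^ p * ((1:ℝ) ^ p + frobNorm (Tn n x) ^ p) :=
                rpow_add_le (by norm_num) (frobNorm_nonneg _) hp1.le
            _ = 2 ^ p * (1 + frobNorm (Tn n x) ^ p) := by rw [Real.one_rpow]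
        have habs : frob (G (θn n x) (Tn n x)) (Tn n x)
            ≤ frobNorm (G (θn n x) (Tn n x)) * frobNorm (Tn n x) :=
          le_trans (le_abs_self _) (abs_frob_le _ _)
        have hGgr := hGq (θn n x) (Tn n x) (hTnd n x)
        have h2p : (0:ℝ) ≤ C ^ q := Real.rpow_nonneg hC.le q
        nlinarith [Real.rpow_nonneg (show (0:ℝ) ≤ 2 by norm_num) p]
      have ha1 : Integrable (fun x => (1:ℝ) + frobNorm (Tn n x) ^ p) μ :=
        (integrable_const 1).add (hTn_int n)
      have ha2 : Integrable (fun x => 2 ^ p * ((1:ℝ) + frobNorm (Tn n x) ^ p)) μ :=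
        ha1.const_mul _
      have ha3 : Integrable (fun x => C ^ q * (2 ^ p * ((1:ℝ) + frobNorm (Tn n x) ^ p))) μ :=
        ha2.const_mul _
      have hc2 : ∫ x, C ^ q * (2 ^ p * (1 + frobNorm (Tn n x) ^ p)) + frobNorm (Tn n x) ^ p ∂μ
          = C ^ q * (2 ^ p * ((μ Set.univ).toReal + ∫ x, frobNorm (Tn n x) ^ p ∂μ))
            + ∫ x, frobNorm (Tn n x) ^ p ∂μ := by
        rw [integral_add ha3 (hTn_int n), integral_const_mul, integral_const_mul,
          integral_add (integrable_const (1:ℝ)) (hTn_int n), integral_const]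
        simp [Measure.real]
      have h2p : (0:ℝ) ≤ C ^ q := Real.rpow_nonneg hC.le q
      have h2q : (0:ℝ) ≤ 2 ^ p := Real.rpow_nonneg (by norm_num) p
      have hMn := hM n
      rw [hc2] at hc1
      nlinarith [mul_le_mul_of_nonneg_left hMn (mul_nonneg h2p h2q)]
    -- pass to the limit in the monotonicity inequality
    have hmono : ∀ n,
        (∫ x, frob (G (θn n x) (Tn n x)) (φ x) ∂μ)
        + (∫ x, frob (G (θn n x) (φ x)) (Tn n x) ∂μ)
        - (∫ x, frob (G (θn n x) (φ x)) (φ x) ∂μ)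
        ≤ ∫ x, frob (G (θn n x) (Tn n x)) (Tn n x) ∂μ := by
      intro n
      have hpos : 0 ≤ ∫ x, frob (G (θn n x) (Tn n x) - G (θn n x) (φ x)) (Tn n x - φ x) ∂μ :=
        integral_nonneg fun x => hG_mono _ _ _ (hTnd n x) (hφd x)
      have i11 : Integrable (fun x => frob (G (θn n x) (Tn n x)) (Tn n x)) μ :=
        aux_int_frob hpq.symm (mG _ _ (hθn n) (hTn n)) (hTn n) (iGn n) (hTn_int n)
      have i12 : Integrable (fun x => frob (G (θn n x) (Tn n x)) (φ x)) μ :=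
        aux_int_frob hpq.symm (mG _ _ (hθn n) (hTn n)) hφm (iGn n) hφi
      have i21 : Integrable (fun x => frob (G (θn n x) (φ x)) (Tn n x)) μ :=
        aux_int_frob hpq.symm (hGφnm n) (hTn n) (iGφn n) (hTn_int n)
      have i22 : Integrable (fun x => frob (G (θn n x) (φ x)) (φ x)) μ :=
        aux_int_frob hpq.symm (hGφnm n) hφm (iGφn n) hφi
      have hsplit : ∫ x, frob (G (θn n x) (Tn n x) - G (θn n x) (φ x)) (Tn n x - φ x) ∂μ
          = ((∫ x, frob (G (θn n x) (Tn n x)) (Tn n x) ∂μ)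
              - ∫ x, frob (G (θn n x) (Tn n x)) (φ x) ∂μ)
            - ((∫ x, frob (G (θn n x) (φ x)) (Tn n x) ∂μ)
              - ∫ x, frob (G (θn n x) (φ x)) (φ x) ∂μ) := by
        have i1s : Integrable (fun x => frob (G (θn n x) (Tn n x)) (Tn n x)
            - frob (G (θn n x) (Tn n x)) (φ x)) μ := i11.sub i12
        have i2s : Integrable (fun x => frob (G (θn n x) (φ x)) (Tn n x)
            - frob (G (θn n x) (φ x)) (φ x)) μ := i21.sub i22
        rw [← integral_sub i11 i12, ← integral_sub i21 i22, ← integral_sub i1s i2s]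
        refine integral_congr_ae (Eventually.of_forall fun x => ?_)
        simp only [frob_sub_left, frob_sub_right]
        ring
      rw [hsplit] at hpos
      linarith
    -- take limits
    have hbl : Tendsto (fun n =>
        (∫ x, frob (G (θn n x) (Tn n x)) (φ x) ∂μ)
        + (∫ x, frob (G (θn n x) (φ x)) (Tn n x) ∂μ)
        - (∫ x, frob (G (θn n x) (φ x)) (φ x) ∂μ)) atTop
        (nhds ((∫ x, frob (χ x) (φ x) ∂μ) + (∫ x, frob (G (θ x) (φ x)) (T x) ∂μ)
          - ∫ x, frob (G (θ x) (φ x)) (φ x) ∂μ)) := (h2.add h3).sub h4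
    have hBle : (∫ x, frob (χ x) (φ x) ∂μ) + (∫ x, frob (G (θ x) (φ x)) (T x) ∂μ)
        - (∫ x, frob (G (θ x) (φ x)) (φ x) ∂μ) ≤ ∫ x, frob (χ x) (T x) ∂μ := by
      have hcb := hbl.isCoboundedUnder_le
      have hbd : IsBoundedUnder (· ≤ ·) atTop
          (fun n => ∫ x, frob (G (θn n x) (Tn n x)) (Tn n x) ∂μ) :=
        isBoundedUnder_of ⟨_, ht1bdd⟩
      have h := limsup_le_limsup (Eventually.of_forall hmono) hcb hbd
      rw [hbl.limsup_eq] at h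
      exact h.trans hlimsup
    -- rearrange
    have j11 : Integrable (fun x => frob (χ x) (T x)) μ :=
      aux_int_frob hpq.symm hχ hT hχ_int hT_int
    have j12 : Integrable (fun x => frob (χ x) (φ x)) μ :=
      aux_int_frob hpq.symm hχ hφm hχ_int hφi
    have j21 : Integrable (fun x => frob (G (θ x) (φ x)) (T x)) μ :=
      aux_int_frob hpq.symm hGφm hT iGφ hT_int
    have j22 : Integrable (fun x => frob (G (θ x) (φ x)) (φ x)) μ :=
      aux_int_frob hpq.symm hGφm hφm iGφ hφi
    have hexp : ∫ x, frob (χ x - G (θ x) (φ x)) (T x - φ x) ∂μ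
        = ((∫ x, frob (χ x) (T x) ∂μ) - ∫ x, frob (χ x) (φ x) ∂μ)
          - ((∫ x, frob (G (θ x) (φ x)) (T x) ∂μ) - ∫ x, frob (G (θ x) (φ x)) (φ x) ∂μ) := by
      have j1s : Integrable (fun x => frob (χ x) (T x) - frob (χ x) (φ x)) μ := j11.sub j12
      have j2s : Integrable (fun x => frob (G (θ x) (φ x)) (T x)
          - frob (G (θ x) (φ x)) (φ x)) μ := j21.sub j22
      rw [← integral_sub j11 j12, ← integral_sub j21 j22, ← integral_sub j1s j2s]
      refine integral_congr_ae (Eventually.of_forall fun x => ?_)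
      simp only [frob_sub_left, frob_sub_right]
      ring
    rw [hexp]
    linarith
  -- integrable majorant used in Steps B and C
  have hiχ1 : Integrable (fun x => frobNorm (χ x)) μ := by
    refine Integrable.mono' ((integrable_const (1:ℝ)).add hχ_int)
      (aux_meas_frobNorm hχ).aestronglyMeasurable (Eventually.of_forall fun x => ?_)
    rw [Real.norm_of_nonneg (frobNorm_nonneg _)]
    have h := rpow_le_one_add_rpow (frobNorm_nonneg (χ x)) zero_le_one hq1.le
    rwa [Real.rpow_one] at h
  have hiT1 : Integrable (fun x => C * (2 + frobNorm (T x)) ^ (p - 1)) μ := by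
    have h2T : ∀ x, (0:ℝ) < 2 + frobNorm (T x) := fun x => by
      have := frobNorm_nonneg (T x); linarith
    refine Integrable.mono' ((((integrable_const ((1:ℝ) + 2 ^ p)).add
        ((((integrable_const (1:ℝ)).add hT_int).const_mul (2 ^ p)).const_mul
          (2 ^ p)))).const_mul C)
      (((continuous_rpow_const (by linarith : (0:ℝ) ≤ p - 1)).measurable.comp
        (measurable_const.add (aux_meas_frobNorm hT))).const_mul C).aestronglyMeasurable
      (Eventually.of_forall fun x => ?_)
    rw [Real.norm_of_nonneg (mul_nonneg hC.le (Real.rpow_nonneg (h2T x).le _))]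
    have h1 : (2 + frobNorm (T x)) ^ (p - 1) ≤ 1 + (2 + frobNorm (T x)) ^ p :=
      rpow_le_one_add_rpow (h2T x).le (by linarith) (by linarith)
    have h2 : (2 + frobNorm (T x)) ^ p ≤ 2 ^ p * (1 + (1 + frobNorm (T x)) ^ p) := by
      have := rpow_add_le (zero_le_one) (show (0:ℝ) ≤ 1 + frobNorm (T x) by
        have := frobNorm_nonneg (T x); linarith) hp1.le
      calc (2 + frobNorm (T x)) ^ p = (1 + (1 + frobNorm (T x))) ^ p := by ring_nf
        _ ≤ 2 ^ p * (1 ^ p + (1 + frobNorm (T x)) ^ p) := this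
        _ = 2 ^ p * (1 + (1 + frobNorm (T x)) ^ p) := by rw [Real.one_rpow]
    have h3 : (1 + frobNorm (T x)) ^ p ≤ 2 ^ p * (1 + frobNorm (T x) ^ p) := by
      have := rpow_add_le zero_le_one (frobNorm_nonneg (T x)) hp1.le
      calc (1 + frobNorm (T x)) ^ p ≤ 2 ^ p * (1 ^ p + frobNorm (T x) ^ p) := this
        _ = 2 ^ p * (1 + frobNorm (T x) ^ p) := by rw [Real.one_rpow]
    have h2p : (0:ℝ) ≤ 2 ^ p := Real.rpow_nonneg (by norm_num) p
    have h5 : (2 + frobNorm (T x)) ^ (p - 1)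
        ≤ (1 + 2 ^ p) + 2 ^ p * (2 ^ p * (1 + frobNorm (T x) ^ p)) := by
      nlinarith
    show C * (2 + frobNorm (T x)) ^ (p - 1)
        ≤ C * ((1 + 2 ^ p) + 2 ^ p * (2 ^ p * (1 + frobNorm (T x) ^ p)))
    nlinarith [hC.le]
  have hFrobTbound : ∀ x, frobNorm (χ x - G (θ x) (T x))
      ≤ frobNorm (χ x) + C * (2 + frobNorm (T x)) ^ (p - 1) := by
    intro x
    have h1 := frobNorm_sub_le (χ x) (G (θ x) (T x))
    have h3 := hG_growth (θ x) (T x) (hTd x)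
    have h4 : C * (1 + frobNorm (T x)) ^ (p-1) ≤ C * (2 + frobNorm (T x)) ^ (p-1) :=
      mul_le_mul_of_nonneg_left (Real.rpow_le_rpow
        (by linarith [frobNorm_nonneg (T x)]) (by linarith) (by linarith)) hC.le
    linarith
  have hbint : Integrable (fun x => frobNorm (χ x) + C * (2 + frobNorm (T x)) ^ (p - 1)) μ :=
    hiχ1.add hiT1
  -- Step B : test against bounded functions
  have hStepB : ∀ ψ : X → M3, Measurable ψ → (∀ x, IsS3d (ψ x)) →
      (∀ x, frobNorm (ψ x) ≤ 1) →
      0 ≤ ∫ x, frob (χ x - G (θ x) (T x)) (ψ x) ∂μ := by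
    intro ψ hψm hψd hψb
    set ε : ℕ → ℝ := fun k => 1 / ((k:ℝ) + 1) with hε
    have hε0 : ∀ k, 0 < ε k := fun k => by positivity
    have hε1 : ∀ k, ε k ≤ 1 := by
      intro k
      rw [hε, div_le_one (by positivity)]
      have : (0:ℝ) ≤ (k:ℝ) := Nat.cast_nonneg k
      linarith
    have hφm : ∀ k, Measurable (fun x => T x - ε k • ψ x) := fun k =>
      hT.sub (hψm.const_smul (ε k))
    have hφd : ∀ k x, IsS3d (T x - ε k • ψ x) := fun k x =>
      (hTd x).sub' ((hψd x).smul' (ε k))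
    have hφnorm : ∀ k x, frobNorm (T x - ε k • ψ x) ≤ 1 + frobNorm (T x) := by
      intro k x
      have h1 := frobNorm_sub_le (T x) (ε k • ψ x)
      have h2 : frobNorm (ε k • ψ x) = |ε k| * frobNorm (ψ x) := frobNorm_smul _ _
      have h3 : |ε k| = ε k := abs_of_pos (hε0 k)
      have h4 : ε k * frobNorm (ψ x) ≤ 1 :=
        mul_le_one₀ (hε1 k) (frobNorm_nonneg _) (hψb x)
      rw [h3] at h2
      linarith
    have hφi : ∀ k, Integrable (fun x => frobNorm (T x - ε k • ψ x) ^ p) μ := by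
      intro k
      refine Integrable.mono' (((integrable_const (1:ℝ)).add hT_int).const_mul (2 ^ p))
        (aux_meas_frobNorm_rpow (hφm k) hp0.le).aestronglyMeasurable
        (Eventually.of_forall fun x => ?_)
      rw [Real.norm_of_nonneg (Real.rpow_nonneg (frobNorm_nonneg _) _)]
      calc frobNorm (T x - ε k • ψ x) ^ p ≤ (1 + frobNorm (T x)) ^ p :=
            Real.rpow_le_rpow (frobNorm_nonneg _) (hφnorm k x)
              (by linarith : (0:ℝ) ≤ p)
        _ ≤ 2 ^ p * (1 ^ p + frobNorm (T x) ^ p) :=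
            rpow_add_le zero_le_one (frobNorm_nonneg _) hp1.le
        _ = 2 ^ p * (1 + frobNorm (T x) ^ p) := by rw [Real.one_rpow]
    have hA : ∀ k, 0 ≤ ∫ x, frob (χ x - G (θ x) (T x - ε k • ψ x)) (ψ x) ∂μ := by
      intro k
      have h0 := hStepA _ (hφm k) (hφd k) (hφi k)
      have h1 : (0:ℝ) ≤ ε k * ∫ x, frob (χ x - G (θ x) (T x - ε k • ψ x)) (ψ x) ∂μ := by
        rw [← integral_const_mul]
        refine le_trans h0 (le_of_eq (integral_congr_ae (Eventually.of_forall fun x => ?_)))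
        simp only [sub_sub_cancel, frob_smul_right]
      by_contra hcon
      push_neg at hcon
      nlinarith [mul_pos (hε0 k) (neg_pos.mpr hcon)]
    have hlim : Tendsto (fun k => ∫ x, frob (χ x - G (θ x) (T x - ε k • ψ x)) (ψ x) ∂μ)
        atTop (nhds (∫ x, frob (χ x - G (θ x) (T x)) (ψ x) ∂μ)) := by
      refine tendsto_integral_of_dominated_convergence
        (fun x => frobNorm (χ x) + C * (2 + frobNorm (T x)) ^ (p - 1))
        (fun k => (aux_meas_frob (hχ.sub (mG θ _ hθ (hφm k))) hψm).aestronglyMeasurable)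
        hbint (fun k => Eventually.of_forall fun x => ?_)
        (Eventually.of_forall fun x => ?_)
      · rw [Real.norm_eq_abs]
        have hd1 : frobNorm (χ x - G (θ x) (T x - ε k • ψ x))
            ≤ frobNorm (χ x) + C * (2 + frobNorm (T x)) ^ (p - 1) := by
          have h1 := frobNorm_sub_le (χ x) (G (θ x) (T x - ε k • ψ x))
          have h3 := hG_growth (θ x) (T x - ε k • ψ x) (hφd k x)
          have h4 : C * (1 + frobNorm (T x - ε k • ψ x)) ^ (p-1)
              ≤ C * (2 + frobNorm (T x)) ^ (p-1) := by
            refine mul_le_mul_of_nonneg_left (Real.rpow_le_rpow ?_ ?_ (by linarith)) hC.le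
            · have := frobNorm_nonneg (T x - ε k • ψ x); linarith
            · have := hφnorm k x; linarith
          linarith
        calc |frob (χ x - G (θ x) (T x - ε k • ψ x)) (ψ x)|
            ≤ frobNorm (χ x - G (θ x) (T x - ε k • ψ x)) * frobNorm (ψ x) := abs_frob_le _ _
          _ ≤ frobNorm (χ x - G (θ x) (T x - ε k • ψ x)) * 1 :=
              mul_le_mul_of_nonneg_left (hψb x) (frobNorm_nonneg _)
          _ = frobNorm (χ x - G (θ x) (T x - ε k • ψ x)) := mul_one _
          _ ≤ frobNorm (χ x) + C * (2 + frobNorm (T x)) ^ (p - 1) := hd1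
      · have h1 : Tendsto ε atTop (nhds 0) := tendsto_one_div_add_atTop_nhds_zero_nat
        have h2 : Tendsto (fun k => T x - ε k • ψ x) atTop (nhds (T x)) := by
          have h3 := h1.smul_const (ψ x)
          rw [zero_smul] at h3
          have hc : Tendsto (fun _ : ℕ => T x) atTop (nhds (T x)) := tendsto_const_nhds
          simpa using hc.sub h3
        have h3 : Tendsto (fun k => G (θ x) (T x - ε k • ψ x)) atTop
            (nhds (G (θ x) (T x))) :=
          (hG_cont.tendsto (θ x, T x)).comp (tendsto_const_nhds.prodMk_nhds h2)
        exact ((continuous_frob_left (ψ x)).tendsto _).comp (tendsto_const_nhds.sub h3)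
    exact ge_of_tendsto' hlim hA
  -- Step C : conclusion
  have hDm : Measurable (fun x => χ x - G (θ x) (T x)) := hχ.sub (mG θ T hθ hT)
  have hden : ∀ x, (0:ℝ) < 1 + frobNorm (χ x - G (θ x) (T x)) := fun x => by
    have := frobNorm_nonneg (χ x - G (θ x) (T x)); linarith
  have hψm : Measurable (fun x =>
      (-(1 + frobNorm (χ x - G (θ x) (T x)))⁻¹) • (χ x - G (θ x) (T x))) :=
    ((measurable_const.add (aux_meas_frobNorm hDm)).inv.neg).smul hDm
  have hψd : ∀ x, IsS3d ((-(1 + frobNorm (χ x - G (θ x) (T x)))⁻¹) • (χ x - G (θ x) (T x))) :=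
    fun x => (((hχd x).sub' (hG_maps _ _ (hTd x))).smul' _)
  have hψb : ∀ x, frobNorm ((-(1 + frobNorm (χ x - G (θ x) (T x)))⁻¹)
      • (χ x - G (θ x) (T x))) ≤ 1 := by
    intro x
    rw [frobNorm_smul, abs_neg, abs_of_pos (inv_pos.mpr (hden x)),
      inv_mul_le_iff₀ (hden x), mul_one]
    have := frobNorm_nonneg (χ x - G (θ x) (T x)); linarith
  have h0 := hStepB _ hψm hψd hψb
  have hFnn : ∀ x, (0:ℝ) ≤ (1 + frobNorm (χ x - G (θ x) (T x)))⁻¹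
      * (frobNorm (χ x - G (θ x) (T x)) * frobNorm (χ x - G (θ x) (T x))) := fun x => by
    have := frobNorm_nonneg (χ x - G (θ x) (T x))
    have := (hden x).le
    positivity
  have hFint : Integrable (fun x => (1 + frobNorm (χ x - G (θ x) (T x)))⁻¹
      * (frobNorm (χ x - G (θ x) (T x)) * frobNorm (χ x - G (θ x) (T x)))) μ := by
    refine Integrable.mono' hbint
      (((measurable_const.add (aux_meas_frobNorm hDm)).inv.mul
        ((aux_meas_frobNorm hDm).mul (aux_meas_frobNorm hDm)))).aestronglyMeasurable
      (Eventually.of_forall fun x => ?_)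
    rw [Real.norm_of_nonneg (hFnn x)]
    have hd := frobNorm_nonneg (χ x - G (θ x) (T x))
    have h1 : (1 + frobNorm (χ x - G (θ x) (T x)))⁻¹
        * (frobNorm (χ x - G (θ x) (T x)) * frobNorm (χ x - G (θ x) (T x)))
        ≤ frobNorm (χ x - G (θ x) (T x)) := by
      rw [inv_mul_le_iff₀ (hden x)]
      nlinarith
    linarith [hFrobTbound x]
  have heq : ∀ x, frob (χ x - G (θ x) (T x))
      ((-(1 + frobNorm (χ x - G (θ x) (T x)))⁻¹) • (χ x - G (θ x) (T x)))
      = -((1 + frobNorm (χ x - G (θ x) (T x)))⁻¹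
        * (frobNorm (χ x - G (θ x) (T x)) * frobNorm (χ x - G (θ x) (T x)))) := by
    intro x
    rw [frob_smul_right, frob_self_eq]
    ring
  have hle : ∫ x, (1 + frobNorm (χ x - G (θ x) (T x)))⁻¹
      * (frobNorm (χ x - G (θ x) (T x)) * frobNorm (χ x - G (θ x) (T x))) ∂μ ≤ 0 := by
    have h1 : (0:ℝ) ≤ ∫ x, -((1 + frobNorm (χ x - G (θ x) (T x)))⁻¹
        * (frobNorm (χ x - G (θ x) (T x)) * frobNorm (χ x - G (θ x) (T x)))) ∂μ := by
      refine le_trans h0 (le_of_eq (integral_congr_ae (Eventually.of_forall fun x => heq x)))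
    rw [integral_neg] at h1
    linarith
  have hzero : ∫ x, (1 + frobNorm (χ x - G (θ x) (T x)))⁻¹
      * (frobNorm (χ x - G (θ x) (T x)) * frobNorm (χ x - G (θ x) (T x))) ∂μ = 0 :=
    le_antisymm hle (integral_nonneg hFnn)
  have hae := (integral_eq_zero_iff_of_nonneg hFnn hFint).mp hzero
  refine hae.mono fun x hx => ?_
  have hx' : (1 + frobNorm (χ x - G (θ x) (T x)))⁻¹
      * (frobNorm (χ x - G (θ x) (T x)) * frobNorm (χ x - G (θ x) (T x))) = 0 := hx
  have h1 : frobNorm (χ x - G (θ x) (T x)) * frobNorm (χ x - G (θ x) (T x)) = 0 := by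
    rcases mul_eq_zero.mp hx' with h | h
    · exact absurd h (ne_of_gt (inv_pos.mpr (hden x)))
    · exact h
  have h2 : frobNorm (χ x - G (θ x) (T x)) = 0 := by
    rcases mul_self_eq_zero.mp h1 with h
    exact h
  have h3 : χ x - G (θ x) (T x) = 0 := (frobNorm_eq_zero_iff _).mp h2
  exact sub_eq_zero.mp h3
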